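/- Consider the ODE system for (vᵢ, σᵢ) ∈ S²_v × ℝ³, i = 1,…,N: v̇ᵢ = σᵢ × vᵢ, σ̇ᵢ = (J nᵢ vᵢ × w − αᵢ σᵢ × vᵢ)/v² − η σᵢ, with w = (1/N) Σⱼ nⱼ vⱼ, nᵢ > 0, η > 0, J > 0, αᵢ ∈ ℝ. Define U = (J/(4Nv²)) Σ_{i,j} nᵢnⱼ|vᵢ−vⱼ|² and E(t) = (1/2)Σᵢ|σᵢ(t)|² + U(v₁(t),…,v_N(t)). Then along any solution, Ė(t) = −η Σᵢ |σᵢ(t)|², and hence E(t) + η ∫₀ᵗ Σᵢ |σᵢ(s)|² ds = E(0) and |σᵢ(t)| ≤ √(2E(0)) for all t ≥ 0. -/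

import Mathlib

open Matrix MeasureTheory

def dot3 (u w : Fin 3 → ℝ) : ℝ := ∑ i, u i * w i

noncomputable def norm3 (u : Fin 3 → ℝ) : ℝ := Real.sqrt (dot3 u u)

lemma hasDerivAt_dot3 {f g : ℝ → Fin 3 → ℝ} {f' g' : Fin 3 → ℝ} {t : ℝ}
    (hf : HasDerivAt f f' t) (hg : HasDerivAt g g' t) :
    HasDerivAt (fun s => dot3 (f s) (g s)) (dot3 f' (g t) + dot3 (f t) g') t := by
  have h : ∀ k : Fin 3, HasDerivAt (fun s => f s k * g s k) (f' k * g t k + f t k * g' k) t :=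
    fun k => (hasDerivAt_pi.1 hf k).mul (hasDerivAt_pi.1 hg k)
  simpa [dot3, Finset.sum_add_distrib] using HasDerivAt.fun_sum (fun k _ => h k)

lemma dot3_comm (u w : Fin 3 → ℝ) : dot3 u w = dot3 w u := by
  simp [dot3, mul_comm]
lemma dot3_smul_left (a : ℝ) (u w : Fin 3 → ℝ) : dot3 (a • u) w = a * dot3 u w := by
  simp [dot3, Finset.mul_sum, mul_assoc]
lemma dot3_smul_right (a : ℝ) (u w : Fin 3 → ℝ) : dot3 u (a • w) = a * dot3 u w := by
  simp [dot3, Finset.mul_sum, mul_left_comm]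
lemma dot3_sub_left (u v w : Fin 3 → ℝ) : dot3 (u - v) w = dot3 u w - dot3 v w := by
  simp [dot3, sub_mul, Finset.sum_sub_distrib]
lemma dot3_sub_right (u v w : Fin 3 → ℝ) : dot3 u (v - w) = dot3 u v - dot3 u w := by
  simp [dot3, mul_sub, Finset.sum_sub_distrib]
lemma dot3_self_nonneg (u : Fin 3 → ℝ) : 0 ≤ dot3 u u :=
  Finset.sum_nonneg fun i _ => mul_self_nonneg _
lemma dot3_self_cross (u w : Fin 3 → ℝ) : dot3 u (u ⨯₃ w) = 0 := dot_self_cross u w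
lemma dot3_cross_self (u w : Fin 3 → ℝ) : dot3 w (u ⨯₃ w) = 0 := dot_cross_self u w
lemma dot3_triple (u v w : Fin 3 → ℝ) : dot3 u (v ⨯₃ w) = dot3 w (u ⨯₃ v) := by
  show u ⬝ᵥ (v ⨯₃ w) = w ⬝ᵥ (u ⨯₃ v)
  rw [triple_product_permutation, triple_product_permutation]
lemma dot3_sum_left {ι : Type*} (s : Finset ι) (f : ι → Fin 3 → ℝ) (u : Fin 3 → ℝ) :
    dot3 (∑ j ∈ s, f j) u = ∑ j ∈ s, dot3 (f j) u := by
  simp only [dot3, Finset.sum_apply, Finset.sum_mul]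
  exact Finset.sum_comm

lemma key_algebra (N : ℕ) (hN : 0 < N) (v0 J η : ℝ) (hv0 : v0 ≠ 0)
    (n : Fin N → ℝ) (α : Fin N → ℝ) (V S : Fin N → Fin 3 → ℝ) (W : Fin 3 → ℝ)
    (hW : W = (N : ℝ)⁻¹ • ∑ i, n i • V i) :
    (1 / 2) * ∑ i, (dot3 ((v0 ^ 2)⁻¹ • ((J * n i) • (V i ⨯₃ W) - α i • (S i ⨯₃ V i))
        - η • S i) (S i)
      + dot3 (S i) ((v0 ^ 2)⁻¹ • ((J * n i) • (V i ⨯₃ W) - α i • (S i ⨯₃ V i))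
        - η • S i))
    + J / (4 * N * v0 ^ 2) * ∑ i, ∑ j, n i * n j *
        (dot3 (S i ⨯₃ V i - S j ⨯₃ V j) (V i - V j)
          + dot3 (V i - V j) (S i ⨯₃ V i - S j ⨯₃ V j))
    = -η * ∑ i, dot3 (S i) (S i) := by
  have hNr : (N : ℝ) ≠ 0 := Nat.cast_ne_zero.2 hN.ne'
  set T : Fin N → ℝ := fun i => dot3 W (S i ⨯₃ V i) with hT
  -- sum over j of n j * dot3 (V j) X = N * dot3 W X
  have hsum : ∀ X : Fin 3 → ℝ, ∑ j, n j * dot3 (V j) X = (N : ℝ) * dot3 W X := by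
    intro X
    rw [hW, dot3_smul_left, dot3_sum_left]
    simp only [dot3_smul_left]
    rw [← mul_assoc, mul_inv_cancel₀ hNr, one_mul]
  -- kinetic part
  have h1 : (1 / 2) * ∑ i, (dot3 ((v0 ^ 2)⁻¹ • ((J * n i) • (V i ⨯₃ W) - α i • (S i ⨯₃ V i))
        - η • S i) (S i)
      + dot3 (S i) ((v0 ^ 2)⁻¹ • ((J * n i) • (V i ⨯₃ W) - α i • (S i ⨯₃ V i))
        - η • S i))
      = (v0 ^ 2)⁻¹ * J * ∑ i, n i * T i - η * ∑ i, dot3 (S i) (S i) := by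
    have hD : ∀ i, dot3 (S i) ((v0 ^ 2)⁻¹ • ((J * n i) • (V i ⨯₃ W) - α i • (S i ⨯₃ V i))
        - η • S i) = (v0 ^ 2)⁻¹ * (J * n i) * T i - η * dot3 (S i) (S i) := by
      intro i
      rw [dot3_sub_right, dot3_smul_right, dot3_sub_right, dot3_smul_right, dot3_smul_right,
        dot3_self_cross, dot3_triple, dot3_smul_right]
      ring
    have step : ∀ i : Fin N, dot3 ((v0 ^ 2)⁻¹ • ((J * n i) • (V i ⨯₃ W) - α i • (S i ⨯₃ V i))
        - η • S i) (S i)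
      + dot3 (S i) ((v0 ^ 2)⁻¹ • ((J * n i) • (V i ⨯₃ W) - α i • (S i ⨯₃ V i))
        - η • S i) = 2 * ((v0 ^ 2)⁻¹ * (J * n i) * T i - η * dot3 (S i) (S i)) := by
      intro i
      rw [dot3_comm _ (S i), hD i]; ring
    rw [Finset.sum_congr rfl fun i _ => step i]
    simp only [Finset.mul_sum, ← Finset.sum_sub_distrib]
    exact Finset.sum_congr rfl fun i _ => by ring
  -- potential part
  have h2 : J / (4 * N * v0 ^ 2) * ∑ i, ∑ j, n i * n j *
        (dot3 (S i ⨯₃ V i - S j ⨯₃ V j) (V i - V j)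
          + dot3 (V i - V j) (S i ⨯₃ V i - S j ⨯₃ V j))
      = -((v0 ^ 2)⁻¹ * J * ∑ i, n i * T i) := by
    have hB : ∀ i j : Fin N, n i * n j *
        (dot3 (S i ⨯₃ V i - S j ⨯₃ V j) (V i - V j)
          + dot3 (V i - V j) (S i ⨯₃ V i - S j ⨯₃ V j))
        = -2 * (n i * n j * dot3 (V i) (S j ⨯₃ V j) + n i * n j * dot3 (V j) (S i ⨯₃ V i)) := by
      intro i j
      rw [dot3_comm _ (V i - V j)]
      rw [dot3_sub_left, dot3_sub_right, dot3_sub_right, dot3_cross_self, dot3_cross_self]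
      ring
    rw [Finset.sum_congr rfl fun i _ => Finset.sum_congr rfl fun j _ => hB i j]
    have hsplit : ∑ i, ∑ j, (-2 : ℝ) * (n i * n j * dot3 (V i) (S j ⨯₃ V j)
          + n i * n j * dot3 (V j) (S i ⨯₃ V i))
        = -4 * ∑ i, n i * ((N : ℝ) * T i) := by
      have e1 : ∑ i, ∑ j, n i * n j * dot3 (V i) (S j ⨯₃ V j)
          = ∑ i, ∑ j, n i * n j * dot3 (V j) (S i ⨯₃ V i) := by
        rw [Finset.sum_comm]
        exact Finset.sum_congr rfl fun i _ => Finset.sum_congr rfl fun j _ => by ring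
      have e2 : ∀ i : Fin N, ∑ j, n i * n j * dot3 (V j) (S i ⨯₃ V i)
          = n i * ((N : ℝ) * T i) := by
        intro i
        rw [← hsum (S i ⨯₃ V i), Finset.mul_sum]
        exact Finset.sum_congr rfl fun j _ => by ring
      have e3 : ∑ i, ∑ j, (-2 : ℝ) * (n i * n j * dot3 (V i) (S j ⨯₃ V j)
            + n i * n j * dot3 (V j) (S i ⨯₃ V i))
          = -2 * ((∑ i, ∑ j, n i * n j * dot3 (V i) (S j ⨯₃ V j))
              + ∑ i, ∑ j, n i * n j * dot3 (V j) (S i ⨯₃ V i)) := by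
        simp only [mul_add, Finset.mul_sum, ← Finset.sum_add_distrib]
      rw [e3, e1, ← two_mul, Finset.sum_congr rfl fun i _ => e2 i]
      ring
    rw [hsplit]
    rw [show ∑ i, n i * ((N : ℝ) * T i) = (N : ℝ) * ∑ i, n i * T i by
      rw [Finset.mul_sum]; exact Finset.sum_congr rfl fun i _ => by ring]
    have hv2 : v0 ^ 2 ≠ 0 := pow_ne_zero 2 hv0
    field_simp
  rw [h1, h2]
  ring


/-- Energy dissipation for the dissipative inertial spin system:
along solutions of `v̇ᵢ = σᵢ × vᵢ`, `σ̇ᵢ = (J nᵢ vᵢ × w − αᵢ σᵢ × vᵢ)/v² − η σᵢ`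
with `w = (1/N) Σⱼ nⱼ vⱼ`, `|vᵢ| = v`, `vᵢ·σᵢ = 0`, the energy
`E = (1/2)Σᵢ|σᵢ|² + U` satisfies `Ė = −η Σᵢ|σᵢ|²`, hence
`E(t) + η ∫₀ᵗ Σᵢ|σᵢ|² = E(0)` and `|σᵢ(t)| ≤ √(2E(0))` for `t ≥ 0`. -/
theorem energy_dissipation
    (N : ℕ) (hN : 0 < N) (v0 J η : ℝ) (hv0 : 0 < v0) (hJ : 0 < J) (hη : 0 < η)
    (n : Fin N → ℝ) (hn : ∀ i, 0 < n i) (α : Fin N → ℝ)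
    (v σ : Fin N → ℝ → Fin 3 → ℝ)
    (w : ℝ → Fin 3 → ℝ) (hw : ∀ t, w t = (N : ℝ)⁻¹ • ∑ i, n i • v i t)
    (hode_v : ∀ i t, HasDerivAt (v i) (σ i t ⨯₃ v i t) t)
    (hode_σ : ∀ i t, HasDerivAt (σ i)
      ((v0 ^ 2)⁻¹ • ((J * n i) • (v i t ⨯₃ w t) - α i • (σ i t ⨯₃ v i t))
        - η • σ i t) t)
    (hsphere : ∀ i t, dot3 (v i t) (v i t) = v0 ^ 2)
    (horth : ∀ i t, dot3 (v i t) (σ i t) = 0) :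
    let U : ℝ → ℝ := fun t =>
      J / (4 * N * v0 ^ 2) *
        ∑ i, ∑ j, n i * n j * dot3 (v i t - v j t) (v i t - v j t)
    let E : ℝ → ℝ := fun t => (1 / 2) * ∑ i, dot3 (σ i t) (σ i t) + U t
    (∀ t, HasDerivAt E (-η * ∑ i, dot3 (σ i t) (σ i t)) t) ∧
    (∀ t, 0 ≤ t →
      E t + η * ∫ s in (0:ℝ)..t, ∑ i, dot3 (σ i s) (σ i s) = E 0) ∧
    (∀ i t, 0 ≤ t → norm3 (σ i t) ≤ Real.sqrt (2 * E 0)) := by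
  intro U E
  have hEdef : ∀ t, E t = (1 / 2) * ∑ i, dot3 (σ i t) (σ i t) +
      J / (4 * N * v0 ^ 2) *
        ∑ i, ∑ j, n i * n j * dot3 (v i t - v j t) (v i t - v j t) := fun t => rfl
  -- Part 1: the derivative
  have hE : ∀ t, HasDerivAt E (-η * ∑ i, dot3 (σ i t) (σ i t)) t := by
    intro t
    have hkin : HasDerivAt (fun s => (1 / 2 : ℝ) * ∑ i, dot3 (σ i s) (σ i s))
        ((1 / 2) * ∑ i, (dot3 ((v0 ^ 2)⁻¹ • ((J * n i) • (v i t ⨯₃ w t)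
            - α i • (σ i t ⨯₃ v i t)) - η • σ i t) (σ i t)
          + dot3 (σ i t) ((v0 ^ 2)⁻¹ • ((J * n i) • (v i t ⨯₃ w t)
            - α i • (σ i t ⨯₃ v i t)) - η • σ i t))) t :=
      HasDerivAt.const_mul _ (HasDerivAt.fun_sum fun i _ =>
        hasDerivAt_dot3 (hode_σ i t) (hode_σ i t))
    have hpot : HasDerivAt (fun s => J / (4 * N * v0 ^ 2) *
          ∑ i, ∑ j, n i * n j * dot3 (v i s - v j s) (v i s - v j s))
        (J / (4 * N * v0 ^ 2) * ∑ i, ∑ j, n i * n j *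
          (dot3 (σ i t ⨯₃ v i t - σ j t ⨯₃ v j t) (v i t - v j t)
            + dot3 (v i t - v j t) (σ i t ⨯₃ v i t - σ j t ⨯₃ v j t))) t :=
      HasDerivAt.const_mul _ (HasDerivAt.fun_sum fun i _ => HasDerivAt.fun_sum fun j _ =>
        HasDerivAt.const_mul _
          (hasDerivAt_dot3 ((hode_v i t).sub (hode_v j t)) ((hode_v i t).sub (hode_v j t))))
    have h := hkin.add hpot
    have keyeq := key_algebra N hN v0 J η hv0.ne' n α (fun i => v i t) (fun i => σ i t)
      (w t) (hw t)
    rw [keyeq] at h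
    exact h
  refine ⟨hE, ?_⟩
  -- continuity of the dissipation
  have hS : Continuous fun s => ∑ i, dot3 (σ i s) (σ i s) := by
    apply continuous_finset_sum
    intro i _
    have hd : Differentiable ℝ (σ i) := fun s => (hode_σ i s).differentiableAt
    have hc : Continuous (σ i) := hd.continuous
    unfold dot3
    exact continuous_finset_sum _ fun k _ =>
      ((continuous_apply k).comp hc).mul ((continuous_apply k).comp hc)
  -- Part 2: conservation
  have hF : ∀ t, HasDerivAt (fun t => E t + η * ∫ s in (0:ℝ)..t, ∑ i, dot3 (σ i s) (σ i s))
      0 t := by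
    intro t
    have hint : HasDerivAt (fun u => ∫ s in (0:ℝ)..u, ∑ i, dot3 (σ i s) (σ i s))
        (∑ i, dot3 (σ i t) (σ i t)) t :=
      (hS.integral_hasStrictDerivAt 0 t).hasDerivAt
    have := (hE t).add (hint.const_mul η)
    exact this.congr_deriv (by ring)
  have hconst : ∀ t, E t + η * ∫ s in (0:ℝ)..t, ∑ i, dot3 (σ i s) (σ i s) = E 0 := by
    intro t
    have h0 : (fun t => E t + η * ∫ s in (0:ℝ)..t, ∑ i, dot3 (σ i s) (σ i s)) t
        = (fun t => E t + η * ∫ s in (0:ℝ)..t, ∑ i, dot3 (σ i s) (σ i s)) 0 :=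
      is_const_of_deriv_eq_zero (fun x => (hF x).differentiableAt)
        (fun x => (hF x).deriv) t 0
    simpa [intervalIntegral.integral_same] using h0
  refine ⟨fun t _ => hconst t, ?_⟩
  -- Part 3: uniform bound
  intro i t ht
  have hSnonneg : ∀ s, (0:ℝ) ≤ ∑ j, dot3 (σ j s) (σ j s) :=
    fun s => Finset.sum_nonneg fun j _ => dot3_self_nonneg _
  have hintnn : 0 ≤ ∫ s in (0:ℝ)..t, ∑ j, dot3 (σ j s) (σ j s) :=
    intervalIntegral.integral_nonneg ht fun u _ => hSnonneg u
  have hEt : E t ≤ E 0 := by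
    have := hconst t
    nlinarith [mul_nonneg hη.le hintnn]
  have hUnn : 0 ≤ J / (4 * N * v0 ^ 2) *
      ∑ a, ∑ b, n a * n b * dot3 (v a t - v b t) (v a t - v b t) := by
    apply mul_nonneg
    · apply div_nonneg hJ.le
      positivity
    · exact Finset.sum_nonneg fun a _ => Finset.sum_nonneg fun b _ =>
        mul_nonneg (mul_nonneg (hn a).le (hn b).le) (dot3_self_nonneg _)
  have hsingle : dot3 (σ i t) (σ i t) ≤ ∑ j, dot3 (σ j t) (σ j t) :=
    Finset.single_le_sum (f := fun j => dot3 (σ j t) (σ j t)) (fun j _ => dot3_self_nonneg _) (Finset.mem_univ i)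
  have hQ : dot3 (σ i t) (σ i t) ≤ 2 * E 0 := by
    have hEt' := hEt
    rw [hEdef t, hEdef 0] at hEt'
    rw [hEdef 0]
    linarith
  calc norm3 (σ i t) = Real.sqrt (dot3 (σ i t) (σ i t)) := rfl
    _ ≤ Real.sqrt (2 * E 0) := Real.sqrt_le_sqrt hQ
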